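/- arXiv:1812.10850 — 2 statements merged into one kernel-verified Lean document; each statement's English description precedes it below -/
import Mathlib

section
/- Let Λ₄ ⊆ ℕ be the set of all natural numbers expressible as finite sums ∑_k α_k 4^k with digits α_k ∈ {0,1} (equivalently, naturals all of whose base-4 digits are 0 or 1). Then for every complex number s with |s| < 1, the family (s^λ)_{λ∈Λ₄} is summable, the infinite product ∏_{n=0}^{∞} (1 + s^{4^n}) converges, and ∑_{λ∈Λ₄} s^λ = ∏_{n=0}^{∞} (1 + s^{4^n}). -/
/-- The set `Λ₄` of natural numbers expressible as finite sums `∑ α_k 4^k` with digits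
`α_k ∈ {0,1}`. -/
def Lambda4 : Set ℕ :=
  {m | ∃ (n : ℕ) (α : ℕ → ℕ), (∀ k, α k = 0 ∨ α k = 1) ∧
    m = ∑ k ∈ Finset.range n, α k * 4 ^ k}

namespace Stmt12Aux

def e (A : Finset ℕ) : ℕ := ∑ k ∈ A, 4 ^ k

lemma sum_range_lt (n : ℕ) : ∑ k ∈ Finset.range n, 4 ^ k < 4 ^ n := by
  induction n with
  | zero => simp
  | succ n ih =>
    rw [Finset.sum_range_succ, pow_succ]
    omega

lemma e_lt {n : ℕ} {A : Finset ℕ} (h : A ⊆ Finset.range n) : e A < 4 ^ n :=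
  lt_of_le_of_lt (Finset.sum_le_sum_of_subset h) (sum_range_lt n)

lemma e_inj : Function.Injective e := by
  have key : ∀ n (A B : Finset ℕ), A ⊆ Finset.range n → B ⊆ Finset.range n →
      e A = e B → A = B := by
    intro n
    induction n with
    | zero =>
      intro A B hA hB _
      simp only [Finset.range_zero, Finset.subset_empty] at hA hB
      rw [hA, hB]
    | succ n ih =>
      intro A B hA hB h
      have sub : ∀ {C : Finset ℕ}, C ⊆ Finset.range (n+1) → n ∉ C → C ⊆ Finset.range n := by
        intro C hC hn k hk
        have := hC hk
        simp only [Finset.mem_range] at this ⊢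
        rcases Nat.lt_succ_iff_lt_or_eq.mp this with h' | h'
        · exact h'
        · exact absurd (h' ▸ hk) hn
      have erasesub : ∀ {C : Finset ℕ}, C ⊆ Finset.range (n+1) →
          C.erase n ⊆ Finset.range n := by
        intro C hC
        exact sub (fun k hk => hC (Finset.mem_of_mem_erase hk)) (Finset.notMem_erase n C)
      by_cases hnA : n ∈ A <;> by_cases hnB : n ∈ B
      · have hA' : e A = 4 ^ n + e (A.erase n) := (Finset.add_sum_erase A _ hnA).symm
        have hB' : e B = 4 ^ n + e (B.erase n) := (Finset.add_sum_erase B _ hnB).symm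
        have : A.erase n = B.erase n :=
          ih _ _ (erasesub hA) (erasesub hB) (by omega)
        rw [← Finset.insert_erase hnA, ← Finset.insert_erase hnB, this]
      · exfalso
        have h1 : 4 ^ n ≤ e A := Finset.single_le_sum (fun i _ => Nat.zero_le _) hnA
        have h2 : e B < 4 ^ n := e_lt (sub hB hnB)
        omega
      · exfalso
        have h1 : 4 ^ n ≤ e B := Finset.single_le_sum (fun i _ => Nat.zero_le _) hnB
        have h2 : e A < 4 ^ n := e_lt (sub hA hnA)
        omega
      · exact ih _ _ (sub hA hnA) (sub hB hnB) h
  intro A B h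
  have hA : A ⊆ Finset.range ((A ∪ B).sup id + 1) := by
    intro k hk
    simp only [Finset.mem_range, Nat.lt_succ_iff]
    exact Finset.le_sup (f := id) (Finset.mem_union_left _ hk)
  have hB : B ⊆ Finset.range ((A ∪ B).sup id + 1) := by
    intro k hk
    simp only [Finset.mem_range, Nat.lt_succ_iff]
    exact Finset.le_sup (f := id) (Finset.mem_union_right _ hk)
  exact key _ A B hA hB h

lemma range_e : Set.range e = Lambda4 := by
  ext m
  constructor
  · rintro ⟨A, rfl⟩
    refine ⟨A.sup id + 1, fun k => if k ∈ A then 1 else 0, fun k => by by_cases h : k ∈ A <;> simp [h], ?_⟩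
    have hA : Finset.range (A.sup id + 1) ∩ A = A := by
      rw [Finset.inter_eq_right]
      intro k hk
      simp only [Finset.mem_range, Nat.lt_succ_iff]
      exact Finset.le_sup (f := id) hk
    calc e A = ∑ k ∈ Finset.range (A.sup id + 1) ∩ A, 4 ^ k := by rw [hA, e]
    _ = ∑ k ∈ Finset.range (A.sup id + 1), if k ∈ A then 4 ^ k else 0 := by
        rw [Finset.sum_ite_mem]
    _ = ∑ k ∈ Finset.range (A.sup id + 1), (if k ∈ A then 1 else 0) * 4 ^ k := by
        apply Finset.sum_congr rfl; intro k _; split <;> simp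
  · rintro ⟨n, α, hα, rfl⟩
    refine ⟨(Finset.range n).filter (fun k => α k = 1), ?_⟩
    rw [e, Finset.sum_filter]
    apply Finset.sum_congr rfl
    intro k _
    rcases hα k with h | h <;> simp [h]

end Stmt12Aux

open Stmt12Aux in
/-- For `|s| < 1` the generating function of `Λ₄` has the infinite-product
representation `∑_{λ∈Λ₄} s^λ = ∏_{n=0}^∞ (1 + s^{4^n})`. -/
theorem stmt12 (s : ℂ) (hs : ‖s‖ < 1) :
    Summable (fun l : Lambda4 => s ^ (l : ℕ)) ∧
    Multipliable (fun n : ℕ => 1 + s ^ (4 ^ n)) ∧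
    ∑' l : Lambda4, s ^ (l : ℕ) = ∏' n : ℕ, (1 + s ^ (4 ^ n)) := by
  have hgeom : Summable (fun n : ℕ => s ^ n) := summable_geometric_of_norm_lt_one hs
  have hg : Summable (fun A : Finset ℕ => s ^ e A) := hgeom.comp_injective e_inj
  obtain ⟨T, hT⟩ := hg
  -- transfer the sum to Lambda4
  have hsumL : HasSum (fun l : Lambda4 => s ^ (l : ℕ)) T := by
    rw [show Lambda4 = Set.range e from range_e.symm]
    exact ((Equiv.ofInjective e e_inj).hasSum_iff (f := fun x : Set.range e => s ^ (x : ℕ))).mp hT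
  -- partial products equal sums over powersets
  have hprodF : ∀ F : Finset ℕ, ∏ k ∈ F, (1 + s ^ (4 ^ k)) = ∑ A ∈ F.powerset, s ^ e A := by
    intro F
    have : ∀ k ∈ F, (1 + s ^ (4 ^ k)) = (s ^ (4 ^ k) + 1) := fun k _ => add_comm _ _
    rw [Finset.prod_congr rfl this, Finset.prod_add]
    apply Finset.sum_congr rfl
    intro A hA
    rw [Finset.prod_const_one, mul_one, Finset.prod_pow_eq_pow_sum]
    rfl
  have hpow : Filter.Tendsto (fun F : Finset ℕ => F.powerset) Filter.atTop Filter.atTop := by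
    apply Filter.tendsto_atTop_atTop_of_monotone
    · intro a b hab
      exact Finset.powerset_mono.mpr hab
    · intro S
      refine ⟨S.sup id, fun A hA => ?_⟩
      rw [Finset.mem_powerset]
      exact Finset.le_sup (f := id) hA
  have hProd : HasProd (fun n : ℕ => 1 + s ^ (4 ^ n)) T := by
    have := hT.comp hpow
    exact (by simpa only [Function.comp_def, ← hprodF] using this :
      Filter.Tendsto (fun F : Finset ℕ => ∏ k ∈ F, (1 + s ^ (4 ^ k))) Filter.atTop (nhds T))
  exact ⟨hsumL.summable, hProd.multipliable, hsumL.tsum_eq.trans hProd.tprod_eq.symm⟩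
end

section
/- Let (x_j)_{j∈ℕ} be a strictly increasing sequence of real numbers with 0 < x_0, and let (y_j)_{j∈ℕ} be real numbers such that the series ∑_{j∈ℕ} (y_{j+1} − y_j)² / (x_{j+1} − x_j) converges (is summable). Then there exists a measurable function g : ℝ → ℝ, square-integrable on (0,∞), such that ∫_{(0, x_j]} g(t) dt = y_j for every j ∈ ℕ. Equivalently, the interpolation problem f(x_j) = y_j for all j is solvable by a function f in the Cameron–Martin space of the kernel K(x,y) = min(x,y) on [0,∞). -/
open MeasureTheory

/-- Solvability of the interpolation problem `f(x_j) = y_j` in the Cameron–Martin space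
of the Brownian-motion kernel `K(x,y) = min x y`: if
`∑_j (y_{j+1} − y_j)² / (x_{j+1} − x_j) < ∞`, then there is a square-integrable `g` on
`(0,∞)` with `∫_{(0, x_j]} g = y_j` for all `j`. -/
theorem stmt19 (x : ℕ → ℝ) (hmono : StrictMono x) (hpos : 0 < x 0)
    (y : ℕ → ℝ)
    (hsum : Summable (fun j => (y (j + 1) - y j) ^ 2 / (x (j + 1) - x j))) :
    ∃ g : ℝ → ℝ, Measurable g ∧
      IntegrableOn (fun t => g t ^ 2) (Set.Ioi (0 : ℝ)) ∧
      ∀ j : ℕ, ∫ t in Set.Ioc (0 : ℝ) (x j), g t = y j := by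
  classical
  set c : ℕ → ℝ := fun j => (y (j + 1) - y j) / (x (j + 1) - x j) with hc
  set h : ℕ → ℝ → ℝ := fun j t => Set.indicator (Set.Ioc (x j) (x (j + 1))) (fun _ => c j) t
    with hhdef
  set g : ℝ → ℝ := fun t =>
    Set.indicator (Set.Ioc 0 (x 0)) (fun _ => y 0 / x 0) t + ∑' j, h j t with hgdef
  have hΔ : ∀ j, 0 < x (j + 1) - x j := fun j => sub_pos.2 (hmono (Nat.lt_succ_self j))
  have hx0 : ∀ j, x 0 ≤ x j := fun j => hmono.monotone (Nat.zero_le j)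
  -- disjointness of the pieces
  have hnotmem : ∀ {i j : ℕ}, i ≠ j → ∀ {t : ℝ}, t ∈ Set.Ioc (x j) (x (j + 1)) →
      t ∉ Set.Ioc (x i) (x (i + 1)) := by
    intro i j hij t ht hti
    rcases lt_or_gt_of_ne hij with hlt | hlt
    · have : x (i + 1) ≤ x j := hmono.monotone hlt
      exact absurd (ht.1.trans_le' this) (not_lt.2 hti.2)
    · have : x (j + 1) ≤ x i := hmono.monotone hlt
      exact absurd (hti.1.trans_le' this) (not_lt.2 ht.2)
  have hzero : ∀ {i : ℕ} {t : ℝ}, t ∉ Set.Ioc (x i) (x (i + 1)) → h i t = 0 :=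
    fun hti => Set.indicator_of_notMem hti _
  -- value lemmas
  have hval0 : ∀ t ∈ Set.Ioc (0 : ℝ) (x 0), g t = y 0 / x 0 := by
    intro t ht
    have hz : ∀ j, h j t = 0 := by
      intro j
      refine hzero fun hj => absurd (ht.2.trans_lt ((hx0 j).trans_lt hj.1)) (lt_irrefl t)
    simp [hgdef, Set.indicator_of_mem ht, hz, tsum_zero]
  have hvalj : ∀ j : ℕ, ∀ t ∈ Set.Ioc (x j) (x (j + 1)), g t = c j := by
    intro j t ht
    have h1 : Set.indicator (Set.Ioc 0 (x 0)) (fun _ => y 0 / x 0) t = 0 :=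
      Set.indicator_of_notMem (fun hmem => absurd hmem.2 (not_le.2 ((hx0 j).trans_lt ht.1))) _
    have h2 : (∑' i, h i t) = h j t := tsum_eq_single j fun i hi => hzero (hnotmem hi ht)
    simp only [hgdef, h1, h2, zero_add]
    simp [hhdef, Set.indicator_of_mem ht]
  have hvalout : ∀ {t : ℝ}, (∀ j, t ∉ Set.Ioc (x j) (x (j + 1))) → t ∉ Set.Ioc (0:ℝ) (x 0) →
      g t = 0 := by
    intro t hall h0
    simp [hgdef, Set.indicator_of_notMem h0, fun j => hzero (hall j), tsum_zero]
  -- summability at each point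
  have hsumm : ∀ t, Summable fun j => h j t := by
    intro t
    by_cases hex : ∃ j, t ∈ Set.Ioc (x j) (x (j + 1))
    · obtain ⟨j, hj⟩ := hex
      refine summable_of_ne_finset_zero (s := {j}) fun i hi => ?_
      exact hzero (hnotmem (by simpa using hi) hj)
    · exact summable_of_ne_finset_zero (s := ∅) fun i _ =>
        hzero fun hi => hex ⟨i, hi⟩
  -- measurability
  have hmeas_h : ∀ j, Measurable (h j) :=
    fun j => measurable_const.indicator measurableSet_Ioc
  have hmeasg : Measurable g := by
    have : Measurable fun t => ∑' j, h j t := by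
      refine measurable_of_tendsto_metrizable' Filter.atTop
        (f := fun n t => ∑ j ∈ Finset.range n, h j t)
        (fun n => Finset.measurable_sum _ fun j _ => hmeas_h j) ?_
      rw [tendsto_pi_nhds]
      exact fun t => (hsumm t).hasSum.tendsto_sum_nat
    exact (measurable_const.indicator measurableSet_Ioc).add this
  -- trichotomy for t
  have htri : ∀ t : ℝ, 0 < t → t ≤ x 0 ∨ (∃ j, t ∈ Set.Ioc (x j) (x (j + 1))) ∨ ∀ j, x j < t := by
    intro t ht
    by_cases h0 : t ≤ x 0
    · exact Or.inl h0
    by_cases hex : ∃ j, t ≤ x j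
    · right; left
      have hfind := Nat.find_spec hex
      have hne : Nat.find hex ≠ 0 := fun h' => h0 (h' ▸ hfind)
      obtain ⟨n, hn⟩ := Nat.exists_eq_succ_of_ne_zero hne
      refine ⟨n, ?_, ?_⟩
      · have := Nat.find_min hex (m := n) (by omega)
        exact lt_of_not_ge this
      · rw [← Nat.succ_eq_add_one, ← hn]; exact hfind
    · push_neg at hex
      exact Or.inr (Or.inr hex)
  have htz : ∀ {t : ℝ}, (∀ j, t ∉ Set.Ioc (x j) (x (j + 1))) →
      (∑' j, (Set.Ioc (x j) (x (j + 1))).indicator (fun _ => ENNReal.ofReal (c j ^ 2)) t) = 0 :=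
    fun hall => ENNReal.tsum_eq_zero.2 fun j => Set.indicator_of_notMem (hall j) _
  -- integrability of g^2 on (0, ∞)
  have hint2 : IntegrableOn (fun t => g t ^ 2) (Set.Ioi (0 : ℝ)) := by
    refine ⟨(hmeasg.pow_const 2).aestronglyMeasurable, ?_⟩
    rw [hasFiniteIntegral_iff_ofReal (ae_of_all _ fun t => sq_nonneg _)]
    set A : ℝ → ENNReal := fun t =>
      Set.indicator (Set.Ioc 0 (x 0)) (fun _ => ENNReal.ofReal ((y 0 / x 0) ^ 2)) t with hA
    set B : ℝ → ENNReal := fun t =>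
      ∑' j, Set.indicator (Set.Ioc (x j) (x (j + 1))) (fun _ => ENNReal.ofReal (c j ^ 2)) t
      with hB
    have hpt : ∀ t, ENNReal.ofReal (g t ^ 2) = A t + B t := by
      intro t
      rcases le_or_gt t 0 with ht | ht
      · have h0 : t ∉ Set.Ioc (0:ℝ) (x 0) := fun hmem => absurd (ht.trans_lt hmem.1) (lt_irrefl t)
        have hall : ∀ j, t ∉ Set.Ioc (x j) (x (j + 1)) := fun j hmem =>
          absurd ((ht.trans_lt hpos).trans_le (hx0 j)|>.trans hmem.1) (lt_irrefl t)
        simp [hvalout hall h0, hA, hB, Set.indicator_of_notMem h0, htz hall]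
      rcases htri t ht with h1 | ⟨j, hj⟩ | h3
      · have hmem : t ∈ Set.Ioc (0:ℝ) (x 0) := ⟨ht, h1⟩
        have hall : ∀ j, t ∉ Set.Ioc (x j) (x (j + 1)) := fun j hmem' =>
          absurd (h1.trans_lt ((hx0 j).trans_lt hmem'.1)) (lt_irrefl t)
        simp [hval0 t hmem, hA, hB, Set.indicator_of_mem hmem, htz hall]
      · have h0 : t ∉ Set.Ioc (0:ℝ) (x 0) := fun hmem =>
          absurd (hmem.2.trans_lt ((hx0 j).trans_lt hj.1)) (lt_irrefl t)
        have h2 : (∑' i, (Set.Ioc (x i) (x (i + 1))).indicator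
            (fun _ => ENNReal.ofReal (c i ^ 2)) t) = ENNReal.ofReal (c j ^ 2) := by
          rw [tsum_eq_single j fun i hi => Set.indicator_of_notMem (hnotmem hi hj) _]
          exact Set.indicator_of_mem hj _
        simp [hvalj j t hj, hA, hB, Set.indicator_of_notMem h0, h2]
      · have h0 : t ∉ Set.Ioc (0:ℝ) (x 0) := fun hmem => absurd hmem.2 (not_le.2 (h3 0))
        have hall : ∀ j, t ∉ Set.Ioc (x j) (x (j + 1)) := fun j hmem =>
          absurd hmem.2 (not_le.2 (h3 (j+1)))
        simp [hvalout hall h0, hA, hB, Set.indicator_of_notMem h0, htz hall]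
    calc ∫⁻ t in Set.Ioi (0:ℝ), ENNReal.ofReal (g t ^ 2)
        ≤ ∫⁻ t, ENNReal.ofReal (g t ^ 2) := setLIntegral_le_lintegral _ _
      _ = ∫⁻ t, (A t + B t) := lintegral_congr hpt
      _ = (∫⁻ t, A t) + ∫⁻ t, B t := lintegral_add_left
          (measurable_const.indicator measurableSet_Ioc) _
      _ < ⊤ := by
          have hAval : (∫⁻ t, A t) = ENNReal.ofReal ((y 0 / x 0) ^ 2) * ENNReal.ofReal (x 0) := by
            rw [hA, lintegral_indicator measurableSet_Ioc, setLIntegral_const,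
              Real.volume_Ioc, sub_zero]
          have hBval : (∫⁻ t, B t)
              = ∑' j, ENNReal.ofReal ((y (j + 1) - y j) ^ 2 / (x (j + 1) - x j)) := by
            rw [hB, lintegral_tsum fun j =>
              (measurable_const.indicator measurableSet_Ioc).aemeasurable]
            congr 1
            ext j
            rw [lintegral_indicator measurableSet_Ioc, setLIntegral_const, Real.volume_Ioc,
              ← ENNReal.ofReal_mul (sq_nonneg _)]
            congr 1
            show ((y (j + 1) - y j) / (x (j + 1) - x j)) ^ 2 * (x (j + 1) - x j) = _
            rw [div_pow, sq (x (j + 1) - x j), ← div_div, div_mul_cancel₀ _ (hΔ j).ne']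
          rw [hAval, hBval,
            ← ENNReal.ofReal_tsum_of_nonneg (fun j => div_nonneg (sq_nonneg _) (hΔ j).le) hsum]
          exact ENNReal.add_lt_top.2 ⟨ENNReal.mul_lt_top ENNReal.ofReal_lt_top ENNReal.ofReal_lt_top,
            ENNReal.ofReal_lt_top⟩
  -- the integrals
  have key : ∀ j : ℕ, IntegrableOn g (Set.Ioc 0 (x j)) ∧ ∫ t in Set.Ioc (0:ℝ) (x j), g t = y j := by
    intro j
    induction j with
    | zero =>
      constructor
      · exact (integrableOn_const (by rw [Real.volume_Ioc]; exact ENNReal.ofReal_ne_top)).congr_fun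
          (fun t ht => (hval0 t ht).symm) measurableSet_Ioc
      · rw [setIntegral_congr_fun measurableSet_Ioc hval0, setIntegral_const, Real.volume_real_Ioc_of_le hpos.le,
          sub_zero, smul_eq_mul]
        field_simp
    | succ j ih =>
      have hunion : Set.Ioc (0:ℝ) (x j) ∪ Set.Ioc (x j) (x (j + 1)) = Set.Ioc 0 (x (j + 1)) :=
        Set.Ioc_union_Ioc_eq_Ioc (hpos.le.trans (hx0 j)) (hmono (Nat.lt_succ_self j)).le
      have hdisj : Disjoint (Set.Ioc (0:ℝ) (x j)) (Set.Ioc (x j) (x (j + 1))) :=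
        Set.Ioc_disjoint_Ioc_of_le le_rfl
      have hint2' : IntegrableOn g (Set.Ioc (x j) (x (j + 1))) :=
        (integrableOn_const (by rw [Real.volume_Ioc]; exact ENNReal.ofReal_ne_top)).congr_fun
          (fun t ht => (hvalj j t ht).symm) measurableSet_Ioc
      constructor
      · rw [← hunion]; exact ih.1.union hint2'
      · have hcc : (x (j + 1) - x j) * c j = y (j + 1) - y j := by
          rw [hc, mul_comm, div_mul_cancel₀ _ (hΔ j).ne']
        rw [← hunion, setIntegral_union hdisj measurableSet_Ioc ih.1 hint2', ih.2,
          setIntegral_congr_fun measurableSet_Ioc (hvalj j), setIntegral_const, Real.volume_real_Ioc_of_le (hmono (Nat.lt_succ_self j)).le,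
          smul_eq_mul, hcc]
        ring
  exact ⟨g, hmeasg, hint2, fun j => (key j).2⟩
end
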